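/- arXiv:math/9907019 — 2 statements merged into one kernel-verified Lean document; each statement's English description precedes it below -/
import Mathlib

section
/- Let A = F_r[T] and define, for a monic polynomial n ∈ A of degree d, ⟨n⟩ := n/T^d ∈ F_r[[1/T]] (a 1-unit). For a nonnegative integer j divisible by r - 1, the set {⟨n⟩^j : n monic of degree d} (with multiplicity) equals the set {f(1/T)^j : f a polynomial in the variable u of degree < d with nonzero constant term, f monic in u}. Consequently, with ζ_A(x, -j) = Σ_{d≥0} x^{-d} Σ_{n monic, deg n = d} ⟨n⟩^j and ζ_{A,v}(x, -j) = Σ_{d≥0} x^{-d} Σ_{n monic, deg n = d, n(0)≠0} n(T)^j evaluated under the isomorphism T ↦ 1/T, one has (1 - x^{-1})^{-1} ζ_{A,v}(x, -j) = ζ_A(x, -j), where v = (T). -/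
open Polynomial

private lemma rev_rev {K : Type*} [Semiring K] {p : K[X]} (h : p.coeff 0 ≠ 0) :
    p.reverse.reverse = p := by
  have ht : p.natTrailingDegree = 0 :=
    natTrailingDegree_eq_zero_of_constantCoeff_ne_zero h
  have hd : p.reverse.natDegree = p.natDegree := by
    rw [reverse_natDegree, ht, Nat.sub_zero]
  ext n
  rw [coeff_reverse, coeff_reverse, hd, revAt_invol]

private lemma rev_C_mul {K : Type*} [Field K] {a : K} (ha : a ≠ 0) (p : K[X]) :
    (C a * p).reverse = C a * p.reverse := by
  rcases eq_or_ne p 0 with rfl | hp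
  · simp
  · unfold reverse
    rw [natDegree_C_mul ha, reflect_C_mul]

private lemma monic_decomp {K : Type*} [Field K] {n : K[X]} (hn : n.Monic) :
    ∃ (k : ℕ) (m : K[X]), n = X ^ k * m ∧ m.Monic ∧ m.coeff 0 ≠ 0 ∧
      k + m.natDegree = n.natDegree := by
  have hn0 : n ≠ 0 := hn.ne_zero
  obtain ⟨m, hm⟩ : (X : K[X]) ^ n.natTrailingDegree ∣ n := by
    rw [X_pow_dvd_iff]
    intro e he
    exact coeff_eq_zero_of_lt_natTrailingDegree he
  have hm0 : m ≠ 0 := by rintro rfl; simp at hm; exact hn0 hm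
  have hmon : m.Monic := (monic_X_pow _).of_mul_monic_left (hm ▸ hn)
  refine ⟨n.natTrailingDegree, m, hm, hmon, ?_, ?_⟩
  · have h2 : (X ^ n.natTrailingDegree * m).coeff (0 + n.natTrailingDegree) ≠ 0 := by
      rw [← hm, Nat.zero_add]
      exact trailingCoeff_nonzero_iff_nonzero.mpr hn0
    rwa [coeff_X_pow_mul] at h2
  · conv_rhs => rw [hm]
    rw [natDegree_mul (pow_ne_zero _ X_ne_zero) hm0, natDegree_X_pow]

open Polynomial in
/-- Let `A = F_r[T]` and let `s = 1/T` be the uniformizer in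
`K = F_r((1/T))`, so that `⟨n⟩ = n(1/s)·s^{deg n}` for monic `n`.  For `j` divisible by
`r - 1`, the multiset `{⟨n⟩^j : n monic of degree d}` equals the multiset
`{f(s)^j : f monic with nonzero constant term of degree ≤ d}`; consequently, with
`ζ_A(x,-j) = Σ_d x^{-d} Σ_{n monic, deg n = d} ⟨n⟩^j` and the `v`-adic zeta
(`v = (T)`) transported by the isomorphism `T ↦ 1/T`,
`ζ_{A,v}(x,-j) = Σ_d x^{-d} Σ_{n monic, deg n = d, n(0) ≠ 0} n(s)^j`, one has
`ζ_{A,v}(x,-j) = (1 - x⁻¹)·ζ_A(x,-j)` as power series in `x⁻¹`. -/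
theorem stmt6 (Fr : Type*) [Field Fr] [Fintype Fr]
    (E : ℕ → Finset (Polynomial Fr))
    (hE : ∀ d n, n ∈ E d ↔ n.Monic ∧ n.natDegree = d)
    (F : ℕ → Finset (Polynomial Fr))
    (hF : ∀ d f, f ∈ F d ↔ f.Monic ∧ f.coeff 0 ≠ 0 ∧ f.natDegree ≤ d)
    (Ev : ℕ → Finset (Polynomial Fr))
    (hEv : ∀ d n, n ∈ Ev d ↔ n.Monic ∧ n.natDegree = d ∧ n.coeff 0 ≠ 0)
    (j : ℕ) (hj : (Fintype.card Fr - 1) ∣ j)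
    (s : LaurentSeries Fr) (hs : s = HahnSeries.single (1 : ℤ) (1 : Fr))
    (bracket : Polynomial Fr → LaurentSeries Fr)
    (hbracket : ∀ n : Polynomial Fr, bracket n = aeval s⁻¹ n * s ^ n.natDegree) :
    (∀ d : ℕ, ((E d).val.map fun n => bracket n ^ j) =
        ((F d).val.map fun f => (aeval s f) ^ j)) ∧
    (PowerSeries.mk fun d => ∑ n ∈ Ev d, (aeval s n) ^ j) =
      (1 - PowerSeries.X) * (PowerSeries.mk fun d => ∑ n ∈ E d, bracket n ^ j) := by
  classical
  have hs0 : s ≠ 0 := by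
    rw [hs]; exact HahnSeries.single_ne_zero one_ne_zero
  have hpow : ∀ c : Fr, c ≠ 0 → (algebraMap Fr (LaurentSeries Fr) c) ^ j = 1 := by
    intro c hc
    obtain ⟨k, rfl⟩ := hj
    rw [← map_pow, pow_mul, FiniteField.pow_card_sub_one_eq_one c hc, one_pow, map_one]
  have hbr : ∀ n : Polynomial Fr, bracket n = aeval s n.reverse := by
    intro n
    have hinv : Invertible s⁻¹ := invertibleOfNonzero (inv_ne_zero hs0)
    have h : aeval s n.reverse * s⁻¹ ^ n.natDegree = aeval s⁻¹ n := by
      simpa [aeval_def, invOf_eq_inv, inv_inv] using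
        eval₂_reverse_mul_pow (algebraMap Fr (LaurentSeries Fr)) s⁻¹ n
    rw [hbracket, ← h, mul_assoc, inv_pow, inv_mul_cancel₀ (pow_ne_zero _ hs0), mul_one]
  have key : ∀ d : ℕ, ((E d).val.map fun n => bracket n ^ j) =
      ((F d).val.map fun f => (aeval s f) ^ j) := by
    intro d
    have hφmem : ∀ n : Polynomial Fr, n.Monic → n.natDegree = d →
        (C n.trailingCoeff⁻¹ * n.reverse) ∈ F d := by
      intro n hn hnd
      have hc : n.trailingCoeff ≠ 0 := trailingCoeff_nonzero_iff_nonzero.mpr hn.ne_zero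
      refine (hF d _).mpr ⟨?_, ?_, ?_⟩
      · show (C n.trailingCoeff⁻¹ * n.reverse).leadingCoeff = 1
        rw [leadingCoeff_mul, leadingCoeff_C, reverse_leadingCoeff, inv_mul_cancel₀ hc]
      · rw [coeff_C_mul, coeff_zero_reverse, hn.leadingCoeff, mul_one]
        exact inv_ne_zero hc
      · rw [natDegree_C_mul (inv_ne_zero hc)]
        exact hnd ▸ n.reverse_natDegree_le
    have hrec : ∀ n : Polynomial Fr, n.Monic → n.natDegree = d →
        X ^ (d - (C n.trailingCoeff⁻¹ * n.reverse).natDegree) *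
          (C (C n.trailingCoeff⁻¹ * n.reverse).trailingCoeff⁻¹ *
            (C n.trailingCoeff⁻¹ * n.reverse).reverse) = n := by
      intro n hn hnd
      obtain ⟨k, m, rfl, hm, hc, hdeg⟩ := monic_decomp hn
      have ht0 : m.natTrailingDegree = 0 :=
        natTrailingDegree_eq_zero_of_constantCoeff_ne_zero hc
      have hrevm : (X ^ k * m).reverse = m.reverse := reverse_X_pow_mul m k
      have htc : (X ^ k * m).trailingCoeff = m.coeff 0 := by
        rw [← reverse_leadingCoeff, hrevm, reverse_leadingCoeff]
        show m.coeff m.natTrailingDegree = m.coeff 0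
        rw [ht0]
      have hφ : C (X ^ k * m).trailingCoeff⁻¹ * (X ^ k * m).reverse
          = C (m.coeff 0)⁻¹ * m.reverse := by rw [htc, hrevm]
      rw [hφ]
      have hdegm : (C (m.coeff 0)⁻¹ * m.reverse).natDegree = m.natDegree := by
        rw [natDegree_C_mul (inv_ne_zero hc), reverse_natDegree, ht0, Nat.sub_zero]
      have hrev2 : (C (m.coeff 0)⁻¹ * m.reverse).reverse = C (m.coeff 0)⁻¹ * m := by
        rw [rev_C_mul (inv_ne_zero hc), rev_rev hc]
      have htc2 : (C (m.coeff 0)⁻¹ * m.reverse).trailingCoeff = (m.coeff 0)⁻¹ := by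
        rw [← reverse_leadingCoeff, hrev2, leadingCoeff_mul, leadingCoeff_C,
          hm.leadingCoeff, mul_one]
      have hcan : C (m.coeff 0) * (C (m.coeff 0)⁻¹ * m) = m := by
        rw [← mul_assoc, ← C_mul, mul_inv_cancel₀ hc, C_1, one_mul]
      rw [hdegm, hrev2, htc2, inv_inv, hcan]
      have hk : d - m.natDegree = k := by omega
      rw [hk]
    have hsurj : ∀ f ∈ (F d).val, ∃ n, ∃ hn : n ∈ (E d).val,
        C n.trailingCoeff⁻¹ * n.reverse = f := by
      intro f hf
      obtain ⟨hfm, hc0, hfd⟩ := (hF d f).mp hf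
      have ht0 : f.natTrailingDegree = 0 :=
        natTrailingDegree_eq_zero_of_constantCoeff_ne_zero hc0
      have htc : f.trailingCoeff = f.coeff 0 := by
        show f.coeff f.natTrailingDegree = f.coeff 0
        rw [ht0]
      have hmon' : (C (f.coeff 0)⁻¹ * f.reverse).Monic := by
        show (C (f.coeff 0)⁻¹ * f.reverse).leadingCoeff = 1
        rw [leadingCoeff_mul, leadingCoeff_C, reverse_leadingCoeff, htc,
          inv_mul_cancel₀ hc0]
      have hdegm : (C (f.coeff 0)⁻¹ * f.reverse).natDegree = f.natDegree := by
        rw [natDegree_C_mul (inv_ne_zero hc0), reverse_natDegree, ht0, Nat.sub_zero]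
      refine ⟨X ^ (d - f.natDegree) * (C (f.coeff 0)⁻¹ * f.reverse), ?_, ?_⟩
      · refine (hE d _).mpr ⟨(monic_X_pow _).mul hmon', ?_⟩
        rw [(monic_X_pow _).natDegree_mul hmon', natDegree_X_pow, hdegm]
        omega
      · have hrevn : (X ^ (d - f.natDegree) * (C (f.coeff 0)⁻¹ * f.reverse)).reverse
            = C (f.coeff 0)⁻¹ * f := by
          rw [reverse_X_pow_mul, rev_C_mul (inv_ne_zero hc0), rev_rev hc0]
        have htcn : (X ^ (d - f.natDegree) *
            (C (f.coeff 0)⁻¹ * f.reverse)).trailingCoeff = (f.coeff 0)⁻¹ := by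
          rw [← reverse_leadingCoeff, hrevn, leadingCoeff_mul, leadingCoeff_C,
            hfm.leadingCoeff, mul_one]
        have hcan : C (f.coeff 0) * (C (f.coeff 0)⁻¹ * f) = f := by
          rw [← mul_assoc, ← C_mul, mul_inv_cancel₀ hc0, C_1, one_mul]
        rw [htcn, hrevn, inv_inv, hcan]
    have hval : ∀ n : Polynomial Fr, n.Monic →
        bracket n ^ j = (aeval s (C n.trailingCoeff⁻¹ * n.reverse)) ^ j := by
      intro n hn
      have hc : n.trailingCoeff ≠ 0 := trailingCoeff_nonzero_iff_nonzero.mpr hn.ne_zero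
      rw [hbr, map_mul, aeval_C, mul_pow, hpow _ (inv_ne_zero hc), one_mul]
    exact Multiset.map_eq_map_of_bij_of_nodup _ _ (E d).nodup (F d).nodup
      (fun n _ => C n.trailingCoeff⁻¹ * n.reverse)
      (fun n hn => hφmem n ((hE d n).mp hn).1 ((hE d n).mp hn).2)
      (fun n₁ h₁ n₂ h₂ heq => by
        have heq' : C n₁.trailingCoeff⁻¹ * n₁.reverse =
            C n₂.trailingCoeff⁻¹ * n₂.reverse := heq
        have e1 := hrec n₁ ((hE d n₁).mp h₁).1 ((hE d n₁).mp h₁).2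
        have e2 := hrec n₂ ((hE d n₂).mp h₂).1 ((hE d n₂).mp h₂).2
        rw [← e1, ← e2, heq'])
      hsurj
      (fun n hn => hval n ((hE d n).mp hn).1)
  refine ⟨key, ?_⟩
  have hsum : ∀ e : ℕ, (∑ n ∈ E e, bracket n ^ j) = ∑ f ∈ F e, (aeval s f) ^ j := by
    intro e
    rw [Finset.sum_eq_multiset_sum, Finset.sum_eq_multiset_sum]
    exact congrArg Multiset.sum (key e)
  have hF0 : F 0 = Ev 0 := by
    ext f
    rw [hF, hEv]
    constructor
    · rintro ⟨h1, h2, h3⟩; exact ⟨h1, Nat.le_zero.mp h3, h2⟩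
    · rintro ⟨h1, h2, h3⟩; exact ⟨h1, h3, h2.le⟩
  have hFsplit : ∀ e : ℕ, (∑ f ∈ F (e + 1), (aeval s f) ^ j) =
      (∑ f ∈ F e, (aeval s f) ^ j) + ∑ n ∈ Ev (e + 1), (aeval s n) ^ j := by
    intro e
    have hunion : F (e + 1) = F e ∪ Ev (e + 1) := by
      ext f
      rw [Finset.mem_union, hF, hF, hEv]
      constructor
      · rintro ⟨h1, h2, h3⟩
        rcases Nat.lt_or_ge f.natDegree (e + 1) with h | h
        · exact Or.inl ⟨h1, h2, Nat.lt_succ_iff.mp h⟩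
        · exact Or.inr ⟨h1, le_antisymm h3 h, h2⟩
      · rintro (⟨h1, h2, h3⟩ | ⟨h1, h2, h3⟩)
        · exact ⟨h1, h2, h3.trans (Nat.le_succ e)⟩
        · exact ⟨h1, h3, h2.le⟩
    have hdisj : Disjoint (F e) (Ev (e + 1)) := by
      rw [Finset.disjoint_left]
      intro f hf hf2
      have h1 := ((hF e f).mp hf).2.2
      have h2 := ((hEv (e + 1) f).mp hf2).2.1
      omega
    rw [hunion, Finset.sum_union hdisj]
  ext n
  rw [PowerSeries.coeff_mk, sub_mul, one_mul, map_sub, PowerSeries.coeff_mk]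
  cases n with
  | zero =>
    rw [PowerSeries.coeff_zero_X_mul, sub_zero, hsum, hF0]
  | succ n =>
    rw [PowerSeries.coeff_succ_X_mul, PowerSeries.coeff_mk, hsum, hsum, hFsplit]
    ring_nf
end

section
/- With notation as above (r = 2, A = F_2[T], A' = F_2[√T], n ↦ n' the square-root bijection on monics), define the Dirichlet series L(x,y) = Σ_{n monic in A} x^{-deg_T n} · n'(√θ) · ⟨n⟩^{-y} and ζ_{A'}(x', y') = Σ_{m monic in A'} (x')^{-deg_{√T} m} ⟨m⟩'^{-y'}, where ⟨n⟩ is the 1-unit part with respect to π = 1/T and ⟨m⟩' the 1-unit part with respect to π' = 1/√T. Then for all y ∈ ℤ_p, L(x, y) = ζ_{A'}(x·π', 2y - 1), where the identity is one of formal series in x^{-1} with coefficients in F_2((1/√T)). -/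
private lemma hahn_coeff_sum {α : Type*} (t : Finset α) (f : α → LaurentSeries (ZMod 2)) (g : ℤ) :
    (∑ i ∈ t, f i).coeff g = ∑ i ∈ t, (f i).coeff g := by
  classical
  induction t using Finset.induction_on with
  | empty => simp
  | insert a t h ih => rw [Finset.sum_insert h, Finset.sum_insert h, HahnSeries.coeff_add, ih]

private lemma smul_single_aux (a : ZMod 2) (b : ℤ) :
    a • (HahnSeries.single b (1 : ZMod 2) : LaurentSeries (ZMod 2)) = HahnSeries.single b a := by
  ext g
  rw [HahnSeries.coeff_smul, HahnSeries.coeff_single, HahnSeries.coeff_single]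
  split <;> simp

open Polynomial in
/-- With `r = 2`, `A = F₂[T]`, `A' = F₂[√T]`, `n ↦ n'` the square-root
bijection on monics (`(n')² = n((√T)²)`), work in `K' = F₂((1/√θ))` with uniformizer
`s = π' = 1/√θ` (so `θ = s⁻²`, `√θ = s⁻¹`).  Let `upow` be the `ℤ₂`-exponentiation of
`1`-units.  With `⟨n⟩ = n(θ)/θ^{deg n}` (the 1-unit part w.r.t. `π = 1/T`) and
`⟨m⟩' = m(√θ)/√θ^{deg m}`, the Dirichlet series
`L(x,y) = Σ_{n monic} x^{-deg n}·n'(√θ)·⟨n⟩^{-y}` satisfies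
`L(x,y) = ζ_{A'}(x·π', 2y - 1)`, coefficientwise as formal series in `x⁻¹` with
coefficients in `F₂((1/√θ))`. -/
theorem stmt10
    (E : ℕ → Finset (Polynomial (ZMod 2)))
    (hE : ∀ d n, n ∈ E d ↔ n.Monic ∧ n.natDegree = d)
    (sq : Polynomial (ZMod 2) → Polynomial (ZMod 2))
    (hsq : ∀ n, sq n ^ 2 = n.comp (Polynomial.X ^ 2))
    (s : LaurentSeries (ZMod 2)) (hs : s = HahnSeries.single (1 : ℤ) (1 : ZMod 2))
    (U1 : Set (LaurentSeries (ZMod 2)))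
    (hU1 : ∀ u, u ∈ U1 ↔ ∀ n : ℤ, n ≤ 0 → (u - 1).coeff n = 0)
    (upow : LaurentSeries (ZMod 2) → ℤ_[2] → LaurentSeries (ZMod 2))
    (hmem : ∀ u ∈ U1, ∀ y, upow u y ∈ U1)
    (hint : ∀ u ∈ U1, ∀ m : ℤ, upow u (m : ℤ_[2]) = u ^ m)
    (hadd : ∀ u ∈ U1, ∀ y y' : ℤ_[2], upow u (y + y') = upow u y * upow u y')
    (hmul : ∀ u ∈ U1, ∀ y y' : ℤ_[2], upow u (y * y') = upow (upow u y) y')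
    (hhom : ∀ u ∈ U1, ∀ w ∈ U1, ∀ y : ℤ_[2], upow (u * w) y = upow u y * upow w y)
    (bracket bracket' : Polynomial (ZMod 2) → LaurentSeries (ZMod 2))
    (hbracket : ∀ n, bracket n = aeval ((s⁻¹) ^ 2) n * s ^ (2 * n.natDegree))
    (hbracket' : ∀ m, bracket' m = aeval s⁻¹ m * s ^ m.natDegree)
    (y : ℤ_[2]) :
    (PowerSeries.mk fun d => ∑ n ∈ E d, aeval s⁻¹ (sq n) * upow (bracket n) (-y)) =
      (PowerSeries.mk fun d =>
        s ^ (-(d : ℤ)) * ∑ m ∈ E d, upow (bracket' m) (-(2 * y - 1))) := by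
  classical
  -- over F₂ : n.comp (X^2) = n^2
  have hcomp : ∀ n : Polynomial (ZMod 2), n.comp (Polynomial.X ^ 2) = n ^ 2 := by
    intro n
    have h := Polynomial.map_frobenius_expand 2 n
    rwa [ZMod.frobenius_zmod, Polynomial.map_id, Polynomial.expand_eq_comp_X_pow] at h
  -- squaring is injective, so sq n = n
  have hsq' : ∀ n, sq n = n := by
    intro n
    have h : (sq n + n) ^ 2 = 0 := by
      rw [CharTwo.add_sq, hsq, hcomp, CharTwo.add_self_eq_zero]
    have h0 : sq n + n = 0 := pow_eq_zero_iff (two_ne_zero) |>.mp h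
    have h1 : sq n = -n := eq_neg_of_add_eq_zero_left h0
    rwa [CharTwo.neg_eq] at h1
  have hs0 : s ≠ 0 := by
    rw [hs]; exact HahnSeries.single_ne_zero one_ne_zero
  have hsinv : s⁻¹ = HahnSeries.single (-1 : ℤ) (1 : ZMod 2) := by
    rw [hs, HahnSeries.inv_single, inv_one]
  have hpow : ∀ k : ℕ, s ^ k = HahnSeries.single (k : ℤ) (1 : ZMod 2) := by
    intro k; rw [hs, RatFunc.single_one_eq_pow]
  have hinvpow : ∀ i : ℕ, (s⁻¹) ^ i = HahnSeries.single (-(i : ℤ)) (1 : ZMod 2) := by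
    intro i
    rw [inv_pow, hpow i, HahnSeries.inv_single, inv_one]
  -- expansion of bracket'
  have hbexp : ∀ d : ℕ, ∀ n ∈ E d,
      bracket' n = ∑ i ∈ Finset.range (d + 1),
        HahnSeries.single ((d : ℤ) - i) (n.coeff i) := by
    intro d n hn
    obtain ⟨hmon, hd⟩ := (hE d n).mp hn
    rw [hbracket', Polynomial.aeval_eq_sum_range, hd, Finset.sum_mul]
    refine Finset.sum_congr rfl fun i hi => ?_
    rw [hinvpow, hpow d, Algebra.smul_def]
    show (algebraMap (ZMod 2) (HahnSeries ℤ (ZMod 2))) (n.coeff i) *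
        HahnSeries.single (-(i : ℤ)) 1 * HahnSeries.single (d : ℤ) 1 =
      HahnSeries.single ((d : ℤ) - i) (n.coeff i)
    rcases (by decide : ∀ a : ZMod 2, a = 0 ∨ a = 1) (n.coeff i) with hc | hc <;> rw [hc]
    · simp
    · rw [map_one, one_mul, HahnSeries.single_mul_single, mul_one, neg_add_eq_sub]
  -- bracket' n is a 1-unit
  have hbU : ∀ d : ℕ, ∀ n ∈ E d, bracket' n ∈ U1 := by
    intro d n hn
    obtain ⟨hmon, hd⟩ := (hE d n).mp hn
    rw [hU1]
    intro m hm
    rw [HahnSeries.coeff_sub, hbexp d n hn, hahn_coeff_sum]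
    have h1 : (1 : LaurentSeries (ZMod 2)).coeff m = if m = 0 then 1 else 0 := by
      rw [← HahnSeries.single_zero_one, HahnSeries.coeff_single]
      simp
    rw [h1]
    rcases eq_or_lt_of_le hm with rfl | hm'
    · rw [Finset.sum_eq_single d]
      · have : n.coeff d = 1 := by rw [← hd]; exact hmon.coeff_natDegree
        simp [HahnSeries.coeff_single, this]
      · intro i hi hne
        have hi' : i ≤ d := Nat.lt_succ_iff.mp (Finset.mem_range.mp hi)
        have : (0 : ℤ) ≠ (d : ℤ) - i := by
          have : i ≠ d := hne
          omega
        rw [HahnSeries.coeff_single_of_ne this]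
      · intro h; exact absurd (Finset.self_mem_range_succ d) h
    · have : ∀ i ∈ Finset.range (d + 1),
          (HahnSeries.single ((d : ℤ) - i) (n.coeff i) : LaurentSeries (ZMod 2)).coeff m = 0 := by
        intro i hi
        have hi' : i ≤ d := Nat.lt_succ_iff.mp (Finset.mem_range.mp hi)
        have : m ≠ (d : ℤ) - i := by omega
        exact HahnSeries.coeff_single_of_ne this
      rw [Finset.sum_eq_zero this, if_neg (by omega)]
      ring
  -- bracket n = (bracket' n)^2
  have hb2 : ∀ n : Polynomial (ZMod 2), bracket n = bracket' n ^ 2 := by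
    intro n
    have ha : aeval ((s⁻¹) ^ 2) n = (aeval s⁻¹ n) ^ 2 := by
      have h1 : aeval s⁻¹ (n.comp (Polynomial.X ^ 2)) = aeval ((s⁻¹) ^ 2) n := by
        rw [Polynomial.aeval_comp]; simp
      rw [← h1, hcomp, map_pow]
    rw [hbracket, hbracket', ha, mul_pow, mul_comm 2 n.natDegree, pow_mul]
  -- termwise identity
  have hterm : ∀ d : ℕ, ∀ n ∈ E d,
      aeval s⁻¹ n * upow (bracket n) (-y) =
        s ^ (-(d : ℤ)) * upow (bracket' n) (-(2 * y - 1)) := by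
    intro d n hn
    obtain ⟨hmon, hd⟩ := (hE d n).mp hn
    have hu : bracket' n ∈ U1 := hbU d n hn
    have e1 : upow (bracket n) (-y) = upow (bracket' n) (-(2 * y)) := by
      rw [hb2, pow_two, hhom _ hu _ hu, ← hadd _ hu]
      congr 1; ring
    have e2 : aeval s⁻¹ n = s ^ (-(d : ℤ)) * bracket' n := by
      rw [hbracket', hd, ← zpow_natCast s d, mul_comm ((aeval s⁻¹) n) (s ^ (d : ℤ)),
        ← mul_assoc, ← zpow_add₀ hs0]
      simp
    rw [e2, e1, mul_assoc]
    congr 1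
    have h4 : -(2 * y - 1) = ((1 : ℤ) : ℤ_[2]) + -(2 * y) := by push_cast; ring
    rw [h4, hadd _ hu, hint _ hu 1, zpow_one]
  apply PowerSeries.ext
  intro d
  rw [PowerSeries.coeff_mk, PowerSeries.coeff_mk, Finset.mul_sum]
  refine Finset.sum_congr rfl fun n hn => ?_
  rw [hsq' n]
  exact hterm d n hn
end
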